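/- Let T be a caterpillar and P a path of T containing all vertices of T of degree at least three (i.e., T is a caterpillar subdivision with spine P). Then every P-filleting of T contains an induced subgraph isomorphic to T. -/

import Mathlib

set_option linter.unusedSectionVars false

namespace Stmt18Aux
open SimpleGraph Walk

variable {V : Type*} {G : SimpleGraph V} {u v w : V}

lemma getVert_mem_support' (p : G.Walk u v) {i : ℕ} (hi : i ≤ p.length) :
    p.getVert i ∈ p.support :=
  Walk.mem_support_iff_exists_getVert.2 ⟨i, rfl, hi⟩

lemma getVert_inj {p : G.Walk u v} (hp : p.IsPath) :
    ∀ {i j : ℕ}, i ≤ p.length → j ≤ p.length → p.getVert i = p.getVert j → i = j := by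
  induction p with
  | nil => intro i j hi hj _; simp only [Walk.length_nil, Nat.le_zero] at hi hj; omega
  | cons h q ih =>
    intro i j hi hj hij
    rw [Walk.isPath_def, Walk.support_cons, List.nodup_cons, ← Walk.isPath_def] at hp
    match i, j with
    | 0, 0 => rfl
    | 0, j + 1 =>
      exfalso
      rw [Walk.getVert_zero, Walk.getVert_cons_succ] at hij
      exact hp.1 (hij ▸ getVert_mem_support' q (by simpa using hj))
    | i + 1, 0 =>
      exfalso
      rw [Walk.getVert_zero, Walk.getVert_cons_succ] at hij
      exact hp.1 (hij.symm ▸ getVert_mem_support' q (by simpa using hi))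
    | i + 1, j + 1 =>
      rw [Walk.getVert_cons_succ, Walk.getVert_cons_succ] at hij
      have := ih hp.2 (by simpa using hi) (by simpa using hj) hij
      omega

lemma getVert_append_le (p : G.Walk u v) (q : G.Walk v w) {i : ℕ} (hi : i ≤ p.length) :
    (p.append q).getVert i = p.getVert i := by
  rw [Walk.getVert_append]
  rcases lt_or_eq_of_le hi with h | h
  · simp [h]
  · subst h; simp [Walk.getVert_length]

lemma getVert_append_add (p : G.Walk u v) (q : G.Walk v w) (t : ℕ) :
    (p.append q).getVert (p.length + t) = q.getVert t := by
  rw [Walk.getVert_append]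
  rcases Nat.eq_zero_or_pos t with rfl | ht
  · simp [Walk.getVert_length]
  · have : ¬ p.length + t < p.length := by omega
    simp [this]

lemma isPath_concat {p : G.Walk u v} (hp : p.IsPath) (h : G.Adj v w) (hw : w ∉ p.support) :
    (p.concat h).IsPath := by
  rw [Walk.concat_eq_append]
  rw [Walk.isPath_def, Walk.support_append, List.nodup_append]
  refine ⟨hp.support_nodup, by simp, ?_⟩
  intro a ha b hb
  simp [Walk.support_cons] at hb
  subst hb
  rintro rfl
  exact hw ha

lemma edge_consec {p : G.Walk u v} {a b : V} (hab : s(a, b) ∈ p.edges) :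
    ∃ i, i < p.length ∧ ((p.getVert i = a ∧ p.getVert (i + 1) = b) ∨
      (p.getVert i = b ∧ p.getVert (i + 1) = a)) := by
  induction p with
  | nil => simp at hab
  | cons h q ih =>
    rw [Walk.edges_cons, List.mem_cons] at hab
    rcases hab with hab | hab
    · refine ⟨0, by simp, ?_⟩
      rw [Sym2.eq_iff] at hab
      rcases hab with ⟨rfl, rfl⟩ | ⟨rfl, rfl⟩
      · left; simp [Walk.getVert_zero, Walk.getVert_cons_succ]
      · right; simp [Walk.getVert_zero, Walk.getVert_cons_succ]
    · obtain ⟨i, hi, hh⟩ := ih hab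
      exact ⟨i + 1, by simp only [Walk.length_cons]; omega, by simpa [Walk.getVert_cons_succ] using hh⟩

lemma one_le_length_of_ne (hne : u ≠ v) (p : G.Walk u v) : 1 ≤ p.length := by
  by_contra hl
  push_neg at hl
  interval_cases h : p.length
  exact hne (Walk.eq_of_length_eq_zero h)

end Stmt18Aux

namespace Stmt18
open SimpleGraph Walk Stmt18Aux

variable {α β : Type*} {T : SimpleGraph α} {J : SimpleGraph β} {f : α ↪ β}

def expand (route : ∀ ⦃u v : α⦄, T.Adj u v → J.Walk (f u) (f v)) :
    ∀ {a b : α}, T.Walk a b → J.Walk (f a) (f b)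
  | _, _, .nil => .nil
  | _, _, .cons h q => (route h).append (expand route q)

variable (route : ∀ ⦃u v : α⦄, T.Adj u v → J.Walk (f u) (f v))

@[simp] lemma expand_nil {a : α} : expand route (.nil : T.Walk a a) = .nil := rfl

@[simp] lemma expand_cons {a b c : α} (h : T.Adj a b) (q : T.Walk b c) :
    expand route (.cons h q) = (route h).append (expand route q) := rfl

lemma expand_append : ∀ {a b c : α} (q₁ : T.Walk a b) (q₂ : T.Walk b c),
    expand route (q₁.append q₂) = (expand route q₁).append (expand route q₂)
  | _, _, _, .nil, q₂ => by simp
  | _, _, _, .cons h q, q₂ => by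
    simp only [Walk.cons_append, expand_cons, expand_append q q₂, Walk.append_assoc]

lemma expand_concat {a b c : α} (q : T.Walk a b) (h : T.Adj b c) :
    expand route (q.concat h) = (expand route q).append (route h) := by
  rw [Walk.concat_eq_append, expand_append]
  simp only [expand_cons, expand_nil, Walk.append_nil]

lemma length_le_expand : ∀ {a b : α} (q : T.Walk a b),
    q.length ≤ (expand route q).length
  | _, _, .nil => le_refl 0
  | _, _, .cons h q => by
    have h1 : 1 ≤ (route h).length :=
      one_le_length_of_ne (f.injective.ne h.ne) _
    have := length_le_expand (q := q)
    simp only [expand_cons, Walk.length_append, Walk.length_cons]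
    omega

lemma mem_support_expand : ∀ {a b : α} (q : T.Walk a b) (w : β),
    w ∈ (expand route q).support →
    w = f a ∨ ∃ (c d : α) (h : T.Adj c d), s(c, d) ∈ q.edges ∧ w ∈ (route h).support
  | _, _, .nil, w => by simp
  | _, _, .cons h q, w => by
    intro hw
    simp only [expand_cons, Walk.support_append, List.mem_append] at hw
    rcases hw with hw | hw
    · exact .inr ⟨_, _, h, by simp, hw⟩
    · rcases mem_support_expand q w (List.mem_of_mem_tail hw) with rfl | ⟨c, d, hcd, hce, hcs⟩
      · exact .inr ⟨_, _, h, by simp, Walk.end_mem_support _⟩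
      · exact .inr ⟨c, d, hcd, by simp [hce], hcs⟩

section Props

variable (h1 : ∀ (u v : α) (h : T.Adj u v), (route h).IsPath)
variable (h5 : ∀ (u v : α) (h : T.Adj u v), ∀ w ∈ (route h).support,
      w ≠ f u → w ≠ f v → ∀ x : α, f x ≠ w)
variable (h6 : ∀ (u v x y : α) (h : T.Adj u v) (h' : T.Adj x y), s(u, v) ≠ s(x, y) →
      ∀ w ∈ (route h).support, w ≠ f u → w ≠ f v → w ∉ (route h').support)

include h5 in
lemma f_mem_route {c d : α} (hcd : T.Adj c d) {z : α}
    (hz : f z ∈ (route hcd).support) : z = c ∨ z = d := by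
  by_contra hcon
  push_neg at hcon
  exact h5 c d hcd (f z) hz (fun he => hcon.1 (f.injective he))
    (fun he => hcon.2 (f.injective he)) z rfl

include h1 h5 h6 in
lemma isPath_expand {a b : α} {q : T.Walk a b} (hq : q.IsPath) :
    (expand route q).IsPath := by
  induction q with
  | nil => exact Walk.IsPath.nil
  | @cons a b c h q ih =>
    rw [Walk.cons_isPath_iff] at hq
    obtain ⟨hq, ha⟩ := hq
    have ihp : (expand route q).IsPath := ih hq
    have ihn := ihp.support_nodup
    rw [Walk.support_eq_cons, List.nodup_cons] at ihn
    rw [expand_cons, Walk.isPath_def, Walk.support_append, List.nodup_append]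
    refine ⟨(h1 _ _ h).support_nodup, ihn.2, ?_⟩
    rintro w hw _ hwt rfl
    have hw2 : w ∈ (expand route q).support := List.mem_of_mem_tail hwt
    have hfb : w ≠ f b := by
      rintro rfl
      rw [Walk.support_eq_cons] at hw2
      exact ihn.1 hwt
    rcases mem_support_expand route q w hw2 with rfl | ⟨c', d', hcd, hce, hcs⟩
    · exact hfb rfl
    · by_cases hfa : w = f a
      · subst hfa
        rcases f_mem_route route h5 hcd hcs with rfl | rfl
        · exact ha (q.fst_mem_support_of_mem_edges hce)
        · exact ha (q.snd_mem_support_of_mem_edges hce)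
      · have hne : s(a, b) ≠ s(c', d') := by
          intro he
          rw [← he] at hce
          exact ha (q.fst_mem_support_of_mem_edges hce)
        exact h6 a b c' d' h hcd hne w hw hfa hfb hcs

end Props
section Tree

variable [DecidableEq α] (hT : T.IsTree) (x : α)

noncomputable def tpath (u : α) : T.Walk x u := (hT.existsUnique_path x u).choose

lemma tpath_isPath (u : α) : (tpath hT x u).IsPath :=
  (hT.existsUnique_path x u).choose_spec.1

lemma tpath_eq {u : α} (w : T.Walk x u) (hw : w.IsPath) : w = tpath hT x u :=
  (hT.existsUnique_path x u).choose_spec.2 w hw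

lemma tpath_prefix {u v : α} (h : u ∈ (tpath hT x v).support) :
    ∃ r : T.Walk u v, tpath hT x v = (tpath hT x u).append r := by
  refine ⟨(tpath hT x v).dropUntil u h, ?_⟩
  have h1 : (tpath hT x v).takeUntil u h = tpath hT x u :=
    tpath_eq hT x _ ((tpath_isPath hT x v).takeUntil h)
  rw [← h1]
  exact ((tpath hT x v).take_spec h).symm

lemma tpath_dichot {a b : α} (h : T.Adj a b) :
    tpath hT x b = (tpath hT x a).concat h ∨
      tpath hT x a = (tpath hT x b).concat h.symm := by
  by_cases hb : b ∈ (tpath hT x a).support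
  · right
    have ha : a ∉ (tpath hT x b).support := by
      intro ha
      obtain ⟨r, hr⟩ := tpath_prefix hT x hb
      obtain ⟨r', hr'⟩ := tpath_prefix hT x ha
      have l1 := congrArg Walk.length hr
      have l2 := congrArg Walk.length hr'
      rw [Walk.length_append] at l1 l2
      have : r.length = 0 := by omega
      exact h.ne (Walk.eq_of_length_eq_zero this).symm
    exact (tpath_eq hT x _ (isPath_concat (tpath_isPath hT x b) h.symm ha)).symm
  · left
    exact (tpath_eq hT x _ (isPath_concat (tpath_isPath hT x a) h hb)).symm

lemma tpath_lastedge {u : α} (hu : u ≠ x) :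
    ∃ (w : α) (h : T.Adj w u), tpath hT x u = (tpath hT x w).concat h := by
  have hn1 : 1 ≤ (tpath hT x u).length :=
    one_le_length_of_ne (fun he => hu he.symm) _
  set n := (tpath hT x u).length with hn
  set w := (tpath hT x u).getVert (n - 1) with hw
  have hadj : T.Adj w u := by
    have h2 := Walk.adj_getVert_succ (tpath hT x u) (i := n - 1) (by omega)
    rw [show n - 1 + 1 = n by omega, hn] at h2
    rwa [Walk.getVert_length] at h2
  rcases tpath_dichot hT x hadj with hd | hd
  · exact ⟨w, hadj, hd⟩
  · exfalso
    have hws : w ∈ (tpath hT x u).support := getVert_mem_support' _ (by omega)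
    obtain ⟨r, hr⟩ := tpath_prefix hT x hws
    have l1 := congrArg Walk.length hr
    have l2 := congrArg Walk.length hd
    rw [Walk.length_append] at l1
    rw [Walk.length_concat] at l2
    omega

lemma tpath_nil_self : tpath hT x x = Walk.nil :=
  (tpath_eq hT x Walk.nil Walk.IsPath.nil).symm

end Tree

section Spine

variable [DecidableEq α] (hT : T.IsTree) {x y : α} (p : T.Walk x y) (hp : p.IsPath)

include hp in
lemma tpath_spine {z : α} (hz : z ∈ p.support) : tpath hT x z = p.takeUntil z hz :=
  (tpath_eq hT x _ (hp.takeUntil hz)).symm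

include hp in
lemma edges_tpath_spine {z : α} (hz : z ∈ p.support) :
    ∀ e ∈ (tpath hT x z).edges, e ∈ p.edges := by
  rw [tpath_spine hT p hp hz]
  exact fun e he => p.edges_takeUntil_subset hz he

include hp in
lemma support_tpath_spine {z : α} (hz : z ∈ p.support) :
    ∀ a ∈ (tpath hT x z).support, a ∈ p.support := by
  rw [tpath_spine hT p hp hz]
  exact fun a ha => p.support_takeUntil_subset hz ha

end Spine

noncomputable def gmap (route : ∀ ⦃u v : α⦄, T.Adj u v → J.Walk (f u) (f v))
    (hT : T.IsTree) (x u : α) : β :=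
  (expand route (tpath hT x u)).getVert (tpath hT x u).length

section Master

variable [DecidableEq α] (hT : T.IsTree) {x y : α} {p : T.Walk x y}
variable (hp : p.IsPath)
variable (hspine : ∀ v : α, (∃ a b c : α, a ≠ b ∧ a ≠ c ∧ b ≠ c ∧
    T.Adj v a ∧ T.Adj v b ∧ T.Adj v c) → v ∈ p.support)
variable (h1 : ∀ (u v : α) (h : T.Adj u v), (route h).IsPath)
variable (h3 : ∀ (u v : α) (h : T.Adj u v), s(u, v) ∈ p.edges → (route h).length = 1)
variable (h4 : ∀ (u v : α) (h : T.Adj u v), s(u, v) ∉ p.edges → 2 ≤ (route h).length)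
variable (h5 : ∀ (u v : α) (h : T.Adj u v), ∀ w ∈ (route h).support,
      w ≠ f u → w ≠ f v → ∀ x : α, f x ≠ w)
variable (h6 : ∀ (u v x y : α) (h : T.Adj u v) (h' : T.Adj x y), s(u, v) ≠ s(x, y) →
      ∀ w ∈ (route h).support, w ≠ f u → w ≠ f v → w ∉ (route h').support)
variable (h2 : ∀ (u v : α) (h : T.Adj u v), route h.symm = (route h).reverse)
variable (h7 : ∀ a b : β, J.Adj a b → ∃ (u v : α) (h : T.Adj u v), s(a, b) ∈ (route h).edges)

include h3 in
lemma expand_length_spine : ∀ {a b : α} (q : T.Walk a b), (∀ e ∈ q.edges, e ∈ p.edges) →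
    (expand route q).length = q.length
  | _, _, .nil, _ => rfl
  | _, _, .cons h q, hq => by
    have hr : (route h).length = 1 := h3 _ _ h (hq _ (by simp))
    have ih := expand_length_spine q (fun e he => hq e (by simp [he]))
    simp only [expand_cons, Walk.length_append, Walk.length_cons, hr, ih]
    omega

include hp h3 in
lemma gmap_spine {u : α} (hu : u ∈ p.support) : gmap route hT x u = f u := by
  have hl := expand_length_spine route h3 (tpath hT x u) (edges_tpath_spine hT p hp hu)
  unfold gmap
  rw [← hl, Walk.getVert_length]

include hp h4 in
lemma strict_len {u : α} (hu : u ∉ p.support) :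
    (tpath hT x u).length < (expand route (tpath hT x u)).length := by
  have hux : u ≠ x := fun he => hu (he ▸ p.start_mem_support)
  obtain ⟨w, hlast, hql⟩ := tpath_lastedge hT x hux
  have hlw : s(w, u) ∉ p.edges := fun hmem => hu (p.snd_mem_support_of_mem_edges hmem)
  have hl2 : 2 ≤ (route hlast).length := h4 w u hlast hlw
  have hEw := length_le_expand route (tpath hT x w)
  have e1 : (tpath hT x u).length = (tpath hT x w).length + 1 := by
    rw [hql, Walk.length_concat]
  have e2 : (expand route (tpath hT x u)).length
      = (expand route (tpath hT x w)).length + (route hlast).length := by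
    rw [hql, expand_concat, Walk.length_append]
  omega

include hp hspine h1 h3 h4 h5 h6 in
lemma loc {u c d : α} (hu : u ∉ p.support) (h' : T.Adj c d)
    (hcd : tpath hT x d = (tpath hT x c).concat h')
    (hgu : gmap route hT x u ∈ (route h').support) :
    ∃ r : T.Walk d u, tpath hT x u = (tpath hT x d).append r ∧
      (expand route (tpath hT x c)).length ≤ (tpath hT x u).length ∧
      (tpath hT x u).length ≤ (expand route (tpath hT x c)).length + (route h').length ∧
      gmap route hT x u = (route h').getVert
        ((tpath hT x u).length - (expand route (tpath hT x c)).length) := by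
  have hEu : (expand route (tpath hT x u)).IsPath :=
    isPath_expand route h1 h5 h6 (tpath_isPath hT x u)
  have hqu : (tpath hT x u).IsPath := tpath_isPath hT x u
  have hn_le : (tpath hT x u).length ≤ (expand route (tpath hT x u)).length :=
    length_le_expand route _
  have hstrict := strict_len route hT hp h4 hu
  have hgmem : gmap route hT x u ∈ (expand route (tpath hT x u)).support :=
    getVert_mem_support' _ hn_le
  -- d does not lie on the path to c
  have hdnc : d ∉ (tpath hT x c).support := by
    intro hmem
    have hpd : (tpath hT x d).IsPath := tpath_isPath hT x d
    rw [hcd] at hpd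
    have hnd := hpd.support_nodup
    rw [Walk.support_concat, List.nodup_append] at hnd
    exact hnd.2.2 d hmem d (by simp) rfl
  -- the "child of c" argument
  have child : ∀ _hz : c ∈ (tpath hT x u).support,
      gmap route hT x u = f c → d ∈ (tpath hT x u).support := by
    intro hz hgc
    obtain ⟨r, hr⟩ := tpath_prefix hT x hz
    have hlr := congrArg Walk.length hr
    rw [Walk.length_append] at hlr
    have hler := congrArg Walk.length (congrArg (expand route) hr)
    rw [expand_append, Walk.length_append] at hler
    have hposc : (expand route (tpath hT x u)).getVert
        (expand route (tpath hT x c)).length = f c := by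
      rw [hr, expand_append, getVert_append_le _ _ (le_refl _), Walk.getVert_length]
    have hC : (tpath hT x u).length = (expand route (tpath hT x c)).length :=
      getVert_inj hEu hn_le (by omega) (hgc.trans hposc.symm)
    -- c is not on the spine
    have hcns : c ∉ p.support := by
      intro hcs
      have hec : (expand route (tpath hT x c)).length = (tpath hT x c).length :=
        expand_length_spine route h3 _ (edges_tpath_spine hT p hp hcs)
      have hr0 : r.length = 0 := by omega
      exact hu ((Walk.eq_of_length_eq_zero hr0) ▸ hcs)
    have huc : u ≠ c := by
      rintro rfl
      omega
    have hrlen : 1 ≤ r.length := by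
      rcases Nat.eq_zero_or_pos r.length with h0 | h0
      · exact absurd (Walk.eq_of_length_eq_zero h0).symm huc
      · exact h0
    have hcx : c ≠ x := fun he => hcns (he ▸ p.start_mem_support)
    have hnc1 : 1 ≤ (tpath hT x c).length :=
      one_le_length_of_ne (fun he => hcx he.symm) _
    set nc := (tpath hT x c).length with hnc
    have hcpos : (tpath hT x u).getVert nc = c := by
      rw [hr, getVert_append_le _ _ (le_refl _), Walk.getVert_length]
    have hncn : nc < (tpath hT x u).length := by omega
    have hadj' : T.Adj c ((tpath hT x u).getVert (nc + 1)) := by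
      have := Walk.adj_getVert_succ (tpath hT x u) hncn
      rwa [hcpos] at this
    have hpadj : T.Adj ((tpath hT x u).getVert (nc - 1)) c := by
      have := Walk.adj_getVert_succ (tpath hT x u) (i := nc - 1)
        (by omega)
      rwa [show nc - 1 + 1 = nc by omega, hcpos] at this
    have hpar_mem : (tpath hT x u).getVert (nc - 1) ∈ (tpath hT x c).support := by
      have heq : (tpath hT x u).getVert (nc - 1) = (tpath hT x c).getVert (nc - 1) := by
        rw [hr, getVert_append_le _ _ (by omega)]
      rw [heq]
      exact getVert_mem_support' _ (by omega)
    have hd' : (tpath hT x u).getVert (nc + 1) = d := by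
      by_contra hne
      apply hcns
      refine hspine c ⟨_, _, _, ?_, ?_, ?_, hpadj.symm, hadj', h'⟩
      · intro he
        have := getVert_inj hqu (i := nc - 1) (j := nc + 1) (by omega) (by omega) he
        omega
      · intro he
        exact hdnc (he ▸ hpar_mem)
      · exact hne
    rw [← hd']
    exact getVert_mem_support' _ (by omega)
  -- establish d ∈ (tpath hT x u).support
  have hdsup : d ∈ (tpath hT x u).support := by
    rcases mem_support_expand route _ _ hgmem with hfx | ⟨a, b, hab, habe, habs⟩
    · exfalso
      have h0 : (expand route (tpath hT x u)).getVert 0 = f x := Walk.getVert_zero _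
      have hn0 : (tpath hT x u).length = 0 :=
        getVert_inj hEu hn_le (Nat.zero_le _) (hfx.trans h0.symm)
      exact hu ((Walk.eq_of_length_eq_zero hn0) ▸ p.start_mem_support)
    · by_cases hsame : s(a, b) = s(c, d)
      · rw [hsame] at habe
        exact (tpath hT x u).snd_mem_support_of_mem_edges habe
      · have hfi : gmap route hT x u = f a ∨ gmap route hT x u = f b := by
          by_contra hcon
          push_neg at hcon
          exact (h6 a b c d hab h' hsame _ habs hcon.1 hcon.2) hgu
        have hzsup : ∀ z : α, gmap route hT x u = f z → z ∈ (tpath hT x u).support := by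
          intro z hgz
          rcases hfi with hga | hgb
          · have : z = a := f.injective (hgz.symm.trans hga)
            exact this ▸ (tpath hT x u).fst_mem_support_of_mem_edges habe
          · have : z = b := f.injective (hgz.symm.trans hgb)
            exact this ▸ (tpath hT x u).snd_mem_support_of_mem_edges habe
        rcases hfi with hg | hg
        all_goals {
          rw [hg] at hgu
          rcases f_mem_route route h5 h' hgu with rfl | rfl
          · exact child (hzsup _ hg) hg
          · exact hzsup _ hg
        }
  -- position bookkeeping
  obtain ⟨r, hr⟩ := tpath_prefix hT x hdsup
  have hEu_split : expand route (tpath hT x u)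
      = ((expand route (tpath hT x c)).append (route h')).append (expand route r) := by
    rw [hr, expand_append, hcd, expand_concat]
  set N := (expand route (tpath hT x c)).length with hN
  set L := (route h').length with hL
  obtain ⟨t, htv, htl⟩ := Walk.mem_support_iff_exists_getVert.1 hgu
  have hpos : (expand route (tpath hT x u)).getVert (N + t) = (route h').getVert t := by
    rw [hEu_split]
    rw [getVert_append_le _ _ (by rw [Walk.length_append]; omega)]
    rw [getVert_append_add]
  have hlenEu : (expand route (tpath hT x u)).length
      = N + L + (expand route r).length := by
    rw [hEu_split, Walk.length_append, Walk.length_append]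
  have hnt : (tpath hT x u).length = N + t := by
    refine getVert_inj hEu hn_le (by omega) ?_
    show (expand route (tpath hT x u)).getVert (tpath hT x u).length
      = (expand route (tpath hT x u)).getVert (N + t)
    rw [hpos, htv]
    rfl
  refine ⟨r, hr, by omega, by omega, ?_⟩
  rw [show (tpath hT x u).length - N = t by omega]
  exact htv.symm

include hp in
lemma off_spine_suffix {d u : α} (hd : d ∉ p.support) (r : T.Walk d u)
    (hr : tpath hT x u = (tpath hT x d).append r) :
    ∀ j, (tpath hT x d).length ≤ j → j ≤ (tpath hT x u).length →
      (tpath hT x u).getVert j ∉ p.support := by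
  intro j hj1 hj2 hzs
  set z := (tpath hT x u).getVert j with hzdef
  have hzsup : z ∈ (tpath hT x u).support := getVert_mem_support' _ hj2
  obtain ⟨r', hr'⟩ := tpath_prefix hT x hzsup
  have hlr' := congrArg Walk.length hr'
  rw [Walk.length_append] at hlr'
  have hzpos : (tpath hT x u).getVert (tpath hT x z).length = z := by
    rw [hr', getVert_append_le _ _ (le_refl _), Walk.getVert_length]
  have hjz : j = (tpath hT x z).length :=
    getVert_inj (tpath_isPath hT x u) hj2 (by omega) (hzdef ▸ hzpos.symm)
  have hd_pos : (tpath hT x u).getVert (tpath hT x d).length = d := by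
    rw [hr, getVert_append_le _ _ (le_refl _), Walk.getVert_length]
  have hd_pos2 : (tpath hT x z).getVert (tpath hT x d).length = d := by
    rw [hr', getVert_append_le _ _ (by omega)] at hd_pos
    exact hd_pos
  have hdz : d ∈ (tpath hT x z).support :=
    hd_pos2 ▸ getVert_mem_support' _ (by omega)
  exact hd (support_tpath_spine hT p hp hzs d hdz)

include hp hspine in
lemma chain {d u v : α} (hd : d ∉ p.support) (ru : T.Walk d u) (rv : T.Walk d v)
    (hru : tpath hT x u = (tpath hT x d).append ru)
    (hrv : tpath hT x v = (tpath hT x d).append rv)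
    (hnuv : (tpath hT x u).length ≤ (tpath hT x v).length) :
    ∀ j, (tpath hT x d).length ≤ j → j ≤ (tpath hT x u).length →
      (tpath hT x u).getVert j = (tpath hT x v).getVert j := by
  have hdx : d ≠ x := fun he => hd (he ▸ p.start_mem_support)
  have hnd1 : 1 ≤ (tpath hT x d).length :=
    one_le_length_of_ne (fun he => hdx he.symm) _
  have hlru := congrArg Walk.length hru
  have hlrv := congrArg Walk.length hrv
  rw [Walk.length_append] at hlru hlrv
  intro j
  induction j using Nat.strong_induction_on with
  | _ j IH =>
    intro hj1 hj2
    rcases Nat.eq_or_lt_of_le hj1 with heq | hlt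
    · rw [← heq, hru, hrv, getVert_append_le _ _ (le_refl _),
        getVert_append_le _ _ (le_refl _)]
    · have hprev : ∀ i, i < j → i ≤ (tpath hT x u).length →
          (tpath hT x u).getVert i = (tpath hT x v).getVert i := by
        intro i hi hi2
        rcases le_or_gt (tpath hT x d).length i with hc | hc
        · exact IH i hi hc hi2
        · rw [hru, hrv, getVert_append_le _ _ (le_of_lt hc),
            getVert_append_le _ _ (le_of_lt hc)]
      have hw := hprev (j - 1) (by omega) (by omega)
      have hw2 := hprev (j - 2) (by omega) (by omega)
      have hwoff : (tpath hT x u).getVert (j - 1) ∉ p.support :=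
        off_spine_suffix hT hp hd ru hru (j - 1) (by omega) (by omega)
      have hadj_u : T.Adj ((tpath hT x u).getVert (j - 1)) ((tpath hT x u).getVert j) := by
        have := Walk.adj_getVert_succ (tpath hT x u) (i := j - 1) (by omega)
        rwa [show j - 1 + 1 = j by omega] at this
      have hadj_v : T.Adj ((tpath hT x u).getVert (j - 1)) ((tpath hT x v).getVert j) := by
        have := Walk.adj_getVert_succ (tpath hT x v) (i := j - 1) (by omega)
        rwa [show j - 1 + 1 = j by omega, ← hw] at this
      have hadj_p : T.Adj ((tpath hT x u).getVert (j - 1)) ((tpath hT x u).getVert (j - 2)) := by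
        have := Walk.adj_getVert_succ (tpath hT x u) (i := j - 2) (by omega)
        rw [show j - 2 + 1 = j - 1 by omega] at this
        exact this.symm
      by_contra hne
      apply hwoff
      refine hspine _ ⟨_, _, _, ?_, ?_, hne, hadj_p, hadj_u, hadj_v⟩
      · intro he
        have := getVert_inj (tpath_isPath hT x u) (i := j - 2) (j := j)
          (by omega) (by omega) he
        omega
      · rw [hw2]
        intro he
        have := getVert_inj (tpath_isPath hT x v) (i := j - 2) (j := j)
          (by omega) (by omega) he
        omega

include hp hspine h1 h3 h4 h5 h6 in
lemma main_adj {c d : α} (h' : T.Adj c d)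
    (hcd : tpath hT x d = (tpath hT x c).concat h') {u v : α} {i : ℕ}
    (hi : i < (route h').length)
    (hgu : gmap route hT x u = (route h').getVert i)
    (hgv : gmap route hT x v = (route h').getVert (i + 1)) : T.Adj u v := by
  have hrpath : (route h').IsPath := h1 c d h'
  have hru_mem : gmap route hT x u ∈ (route h').support :=
    hgu ▸ getVert_mem_support' _ (le_of_lt hi)
  have hrv_mem : gmap route hT x v ∈ (route h').support :=
    hgv ▸ getVert_mem_support' _ hi
  have hLedge : s(c, d) ∈ (tpath hT x d).edges := by
    rw [hcd, Walk.edges_concat]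
    simp
  have hnd : (tpath hT x d).length = (tpath hT x c).length + 1 := by
    rw [hcd, Walk.length_concat]
  by_cases hdsp : d ∈ p.support
  · -- spine edge
    have hce : s(c, d) ∈ p.edges := edges_tpath_spine hT p hp hdsp _ hLedge
    have hL1 : (route h').length = 1 := h3 c d h' hce
    have hi0 : i = 0 := by omega
    subst hi0
    have hcsp : c ∈ p.support := p.fst_mem_support_of_mem_edges hce
    have hgu' : gmap route hT x u = f c := by rw [hgu, Walk.getVert_zero]
    have hgv' : gmap route hT x v = f d := by
      rw [hgv, show (0 + 1) = (route h').length by omega, Walk.getVert_length]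
    have hNc : (expand route (tpath hT x c)).length = (tpath hT x c).length :=
      expand_length_spine route h3 _ (edges_tpath_spine hT p hp hcsp)
    have hu_eq : u = c := by
      by_cases hus : u ∈ p.support
      · exact f.injective ((gmap_spine route hT hp h3 hus).symm.trans hgu')
      · exfalso
        obtain ⟨r, hr, hN1, hN2, hgt⟩ :=
          loc route hT hp hspine h1 h3 h4 h5 h6 hus h' hcd hru_mem
        have ht0 : (tpath hT x u).length - (expand route (tpath hT x c)).length = 0 :=
          getVert_inj hrpath (by omega) (Nat.zero_le _)
            (hgt.symm.trans (hgu'.trans (Walk.getVert_zero _).symm))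
        have hlr := congrArg Walk.length hr
        rw [Walk.length_append] at hlr
        omega
    have hv_eq : v = d := by
      by_cases hvs : v ∈ p.support
      · exact f.injective ((gmap_spine route hT hp h3 hvs).symm.trans hgv')
      · exfalso
        obtain ⟨r, hr, hN1, hN2, hgt⟩ :=
          loc route hT hp hspine h1 h3 h4 h5 h6 hvs h' hcd hrv_mem
        have ht1 : (tpath hT x v).length - (expand route (tpath hT x c)).length = 0 + 1 :=
          getVert_inj hrpath (by omega) (by omega) (hgt.symm.trans hgv)
        have hlr := congrArg Walk.length hr
        rw [Walk.length_append] at hlr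
        have hr0 : r.length = 0 := by omega
        exact hvs ((Walk.eq_of_length_eq_zero hr0) ▸ hdsp)
    rw [hu_eq, hv_eq]
    exact h'
  · -- subdivided edge
    have hnotp : s(c, d) ∉ p.edges := fun hmem => hdsp (p.snd_mem_support_of_mem_edges hmem)
    have hL2 : 2 ≤ (route h').length := h4 c d h' hnotp
    have hinternal : ∀ j, 0 < j → j < (route h').length → ∀ z : α,
        f z ≠ (route h').getVert j := by
      intro j hj0 hjL z
      refine h5 c d h' _ (getVert_mem_support' _ (le_of_lt hjL)) ?_ ?_ z
      · intro he
        have h0 : (route h').getVert 0 = f c := Walk.getVert_zero _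
        have := getVert_inj hrpath (le_of_lt hjL) (Nat.zero_le _) (he.trans h0.symm)
        omega
      · intro he
        have h0 : (route h').getVert (route h').length = f d := Walk.getVert_length _
        have := getVert_inj hrpath (le_of_lt hjL) (le_refl _) (he.trans h0.symm)
        omega
    by_cases hus : u ∈ p.support
    · -- u on the spine: u = c, i = 0, and then v = d
      have hgu' : f u = (route h').getVert i := by
        rw [← gmap_spine route hT hp h3 hus]
        exact hgu
      have hucd : u = c ∨ u = d :=
        f_mem_route route h5 h' (hgu' ▸ getVert_mem_support' _ (le_of_lt hi))
      rcases hucd with rfl | rfl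
      swap
      · exact absurd hus hdsp
      have hi0 : i = 0 := by
        have h0 : (route h').getVert 0 = f u := Walk.getVert_zero _
        exact getVert_inj hrpath (le_of_lt hi) (Nat.zero_le _)
          (hgu'.symm.trans h0.symm)
      subst hi0
      have hNc : (expand route (tpath hT x u)).length = (tpath hT x u).length :=
        expand_length_spine route h3 _ (edges_tpath_spine hT p hp hus)
      by_cases hvs : v ∈ p.support
      · exfalso
        exact hinternal 1 (by omega) (by omega) v
          ((gmap_spine route hT hp h3 hvs).symm.trans hgv)
      · obtain ⟨r, hr, hN1, hN2, hgt⟩ :=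
          loc route hT hp hspine h1 h3 h4 h5 h6 hvs h' hcd hrv_mem
        have ht1 : (tpath hT x v).length - (expand route (tpath hT x u)).length = 0 + 1 :=
          getVert_inj hrpath (by omega) (by omega) (hgt.symm.trans hgv)
        have hlr := congrArg Walk.length hr
        rw [Walk.length_append] at hlr
        have hr0 : r.length = 0 := by omega
        have hvd : v = d := (Walk.eq_of_length_eq_zero hr0).symm
        rw [hvd]
        exact h'
    · -- u off the spine
      obtain ⟨ru, hru, hNu1, hNu2, hgtu⟩ :=
        loc route hT hp hspine h1 h3 h4 h5 h6 hus h' hcd hru_mem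
      have hlru := congrArg Walk.length hru
      rw [Walk.length_append] at hlru
      have htu : (tpath hT x u).length - (expand route (tpath hT x c)).length = i :=
        getVert_inj hrpath (by omega) (le_of_lt hi) (hgtu.symm.trans hgu)
      by_cases hvs : v ∈ p.support
      · exfalso
        have hgv' : f v = (route h').getVert (i + 1) := by
          rw [← gmap_spine route hT hp h3 hvs]
          exact hgv
        rcases Nat.lt_or_ge (i + 1) (route h').length with hiL | hiL
        · exact hinternal (i + 1) (by omega) hiL v hgv'
        · have hiL' : i + 1 = (route h').length := by omega
          have hvd : v = d := by
            apply f.injective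
            rw [hgv', hiL', Walk.getVert_length]
          exact hdsp (hvd ▸ hvs)
      · obtain ⟨rv, hrv, hNv1, hNv2, hgtv⟩ :=
          loc route hT hp hspine h1 h3 h4 h5 h6 hvs h' hcd hrv_mem
        have hlrv := congrArg Walk.length hrv
        rw [Walk.length_append] at hlrv
        have htv : (tpath hT x v).length - (expand route (tpath hT x c)).length = i + 1 :=
          getVert_inj hrpath (by omega) (by omega) (hgtv.symm.trans hgv)
        have hnvu : (tpath hT x v).length = (tpath hT x u).length + 1 := by omega
        have hch := chain hT hp hspine hdsp ru rv hru hrv (by omega)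
        have hu_eq : u = (tpath hT x v).getVert (tpath hT x u).length := by
          have := hch (tpath hT x u).length (by omega) (le_refl _)
          rw [← this, Walk.getVert_length]
        have hv_eq : v = (tpath hT x v).getVert ((tpath hT x u).length + 1) := by
          rw [← hnvu, Walk.getVert_length]
        have hadj := Walk.adj_getVert_succ (tpath hT x v)
          (i := (tpath hT x u).length) (by omega)
        rw [← hu_eq, ← hv_eq] at hadj
        exact hadj

include hp h1 h3 h5 h6 in
lemma gmap_eq_f_spine {v z : α} (hz : z ∈ p.support)
    (hgz : gmap route hT x v = f z) : v = z := by
  have hEv : (expand route (tpath hT x v)).IsPath :=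
    isPath_expand route h1 h5 h6 (tpath_isPath hT x v)
  have hn_le := length_le_expand route (tpath hT x v)
  have hgmem : gmap route hT x v ∈ (expand route (tpath hT x v)).support :=
    getVert_mem_support' _ hn_le
  have hzsup : z ∈ (tpath hT x v).support := by
    rcases mem_support_expand route _ _ hgmem with hfx | ⟨a, b, hab, habe, habs⟩
    · have : z = x := f.injective (hgz.symm.trans hfx)
      rw [this]
      exact Walk.start_mem_support _
    · rw [hgz] at habs
      rcases f_mem_route route h5 hab habs with rfl | rfl
      · exact (tpath hT x v).fst_mem_support_of_mem_edges habe
      · exact (tpath hT x v).snd_mem_support_of_mem_edges habe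
  obtain ⟨r, hr⟩ := tpath_prefix hT x hzsup
  have hNz : (expand route (tpath hT x z)).length = (tpath hT x z).length :=
    expand_length_spine route h3 _ (edges_tpath_spine hT p hp hz)
  have hpos : (expand route (tpath hT x v)).getVert
      (expand route (tpath hT x z)).length = f z := by
    rw [hr, expand_append, getVert_append_le _ _ (le_refl _), Walk.getVert_length]
  have hlr := congrArg Walk.length hr
  rw [Walk.length_append] at hlr
  have hle := congrArg Walk.length (congrArg (expand route) hr)
  rw [expand_append, Walk.length_append] at hle
  have hnv : (tpath hT x v).length = (expand route (tpath hT x z)).length :=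
    getVert_inj hEv hn_le (by omega) (hgz.trans hpos.symm)
  have hr0 : r.length = 0 := by omega
  exact (Walk.eq_of_length_eq_zero hr0).symm

include hp hspine h1 h2 h3 h4 h5 h6 in
lemma gmap_injective : Function.Injective (gmap route hT x) := by
  intro u v hguv
  by_cases hus : u ∈ p.support
  · exact (gmap_eq_f_spine route hT hp h1 h3 h5 h6 hus
      (hguv.symm.trans (gmap_spine route hT hp h3 hus))).symm
  · by_cases hvs : v ∈ p.support
    · exact gmap_eq_f_spine route hT hp h1 h3 h5 h6 hvs
        (hguv.trans (gmap_spine route hT hp h3 hvs))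
    · -- both off the spine
      have hn_le := length_le_expand route (tpath hT x u)
      have hgmem : gmap route hT x u ∈ (expand route (tpath hT x u)).support :=
        getVert_mem_support' _ hn_le
      have final : ∀ (c d : α) (h' : T.Adj c d),
          tpath hT x d = (tpath hT x c).concat h' →
          gmap route hT x u ∈ (route h').support → u = v := by
        intro c d h' hcd hmem
        have hrpath : (route h').IsPath := h1 c d h'
        obtain ⟨ru, hru, hNu1, hNu2, hgtu⟩ :=
          loc route hT hp hspine h1 h3 h4 h5 h6 hus h' hcd hmem
        obtain ⟨rv, hrv, hNv1, hNv2, hgtv⟩ :=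
          loc route hT hp hspine h1 h3 h4 h5 h6 hvs h' hcd (hguv ▸ hmem)
        have hteq : (tpath hT x u).length - (expand route (tpath hT x c)).length
            = (tpath hT x v).length - (expand route (tpath hT x c)).length :=
          getVert_inj hrpath (by omega) (by omega)
            (hgtu.symm.trans (hguv.trans hgtv))
        have hlru := congrArg Walk.length hru
        have hlrv := congrArg Walk.length hrv
        rw [Walk.length_append] at hlru hlrv
        have hnuv : (tpath hT x u).length = (tpath hT x v).length := by omega
        by_cases hdsp : d ∈ p.support
        · exfalso
          have hLedge : s(c, d) ∈ (tpath hT x d).edges := by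
            rw [hcd, Walk.edges_concat]
            simp
          have hce : s(c, d) ∈ p.edges := edges_tpath_spine hT p hp hdsp _ hLedge
          have hcsp : c ∈ p.support := p.fst_mem_support_of_mem_edges hce
          have hL1 : (route h').length = 1 := h3 c d h' hce
          rcases Nat.le_one_iff_eq_zero_or_eq_one.1
            (show (tpath hT x u).length - (expand route (tpath hT x c)).length ≤ 1 by omega)
            with ht | ht
          · have hgu' : gmap route hT x u = f c := by
              rw [hgtu, ht, Walk.getVert_zero]
            exact hus ((gmap_eq_f_spine route hT hp h1 h3 h5 h6 hcsp hgu') ▸ hcsp)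
          · have hgu' : gmap route hT x u = f d := by
              rw [hgtu, ht, show (1 : ℕ) = (route h').length from hL1.symm, Walk.getVert_length]
            exact hus ((gmap_eq_f_spine route hT hp h1 h3 h5 h6 hdsp hgu') ▸ hdsp)
        · have hch := chain hT hp hspine hdsp ru rv hru hrv (le_of_eq hnuv)
          have hu_eq := hch (tpath hT x u).length (by omega) (le_refl _)
          rw [Walk.getVert_length] at hu_eq
          rw [hu_eq, hnuv, Walk.getVert_length]
      rcases mem_support_expand route _ _ hgmem with hfx | ⟨a, b, hab, habe, habs⟩
      · exfalso
        have := gmap_eq_f_spine route hT hp h1 h3 h5 h6 p.start_mem_support hfx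
        exact hus (this ▸ p.start_mem_support)
      · rcases tpath_dichot hT x hab with hd | hd
        · exact final a b hab hd habs
        · refine final b a hab.symm hd ?_
          rw [h2 a b hab, Walk.support_reverse]
          exact List.mem_reverse.2 habs

include h1 in
lemma adj_gmap {u v : α} (h : T.Adj u v) :
    J.Adj (gmap route hT x u) (gmap route hT x v) := by
  have key : ∀ (a b : α) (hab : T.Adj a b), tpath hT x b = (tpath hT x a).concat hab →
      J.Adj (gmap route hT x a) (gmap route hT x b) := by
    intro a b hab hcd
    have hEb : expand route (tpath hT x b)
        = (expand route (tpath hT x a)).append (route hab) := by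
      rw [hcd, expand_concat]
    have hnb : (tpath hT x b).length = (tpath hT x a).length + 1 := by
      rw [hcd, Walk.length_concat]
    have hL1 : 1 ≤ (route hab).length := one_le_length_of_ne (f.injective.ne hab.ne) _
    have hna_le := length_le_expand route (tpath hT x a)
    have hga : gmap route hT x a
        = (expand route (tpath hT x b)).getVert (tpath hT x a).length := by
      rw [hEb, getVert_append_le _ _ hna_le]
      rfl
    have hadj := Walk.adj_getVert_succ (expand route (tpath hT x b))
      (i := (tpath hT x a).length) (by rw [hEb, Walk.length_append]; omega)
    rw [← hga] at hadj
    show J.Adj (gmap route hT x a)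
      ((expand route (tpath hT x b)).getVert (tpath hT x b).length)
    rw [hnb]
    exact hadj
  rcases tpath_dichot hT x h with hd | hd
  · exact key u v h hd
  · exact (key v u h.symm hd).symm

include hp hspine h1 h2 h3 h4 h5 h6 h7 in
lemma adj_of_gmap_adj {u v : α}
    (hJadj : J.Adj (gmap route hT x u) (gmap route hT x v)) : T.Adj u v := by
  obtain ⟨a, b, hab, he⟩ := h7 _ _ hJadj
  obtain ⟨i, hiL, hcase⟩ := edge_consec he
  have key : ∀ (c d : α) (h' : T.Adj c d), tpath hT x d = (tpath hT x c).concat h' →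
      ∀ (w z : α) (j : ℕ), j < (route h').length →
        (route h').getVert j = gmap route hT x w →
        (route h').getVert (j + 1) = gmap route hT x z → T.Adj w z :=
    fun c d h' hcd w z j hj hw hz =>
      main_adj route hT hp hspine h1 h3 h4 h5 h6 h' hcd hj hw.symm hz.symm
  rcases tpath_dichot hT x hab with hd | hd
  · rcases hcase with ⟨hc1, hc2⟩ | ⟨hc1, hc2⟩
    · exact key a b hab hd u v i hiL hc1 hc2
    · exact (key a b hab hd v u i hiL hc1 hc2).symm
  · have hrev : route hab.symm = (route hab).reverse := h2 a b hab
    have hLrev : (route hab.symm).length = (route hab).length := by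
      rw [hrev, Walk.length_reverse]
    have hget : ∀ j, (route hab.symm).getVert j
        = (route hab).getVert ((route hab).length - j) := by
      intro j
      rw [hrev, Walk.getVert_reverse]
    have e1 : (route hab.symm).getVert ((route hab).length - i - 1)
        = (route hab).getVert (i + 1) := by
      rw [hget, show (route hab).length - ((route hab).length - i - 1) = i + 1 by omega]
    have e2 : (route hab.symm).getVert ((route hab).length - i - 1 + 1)
        = (route hab).getVert i := by
      rw [hget, show (route hab).length - ((route hab).length - i - 1 + 1) = i by omega]
    rcases hcase with ⟨hc1, hc2⟩ | ⟨hc1, hc2⟩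
    · exact (key b a hab.symm hd v u ((route hab).length - i - 1) (by omega)
        (e1.trans hc2) (e2.trans hc1)).symm
    · exact key b a hab.symm hd u v ((route hab).length - i - 1) (by omega)
        (e1.trans hc2) (e2.trans hc1)

end Master
end Stmt18


/-- `J` is a filleting of `H` relative to the edge set `Pe` (the edges of a path `P` of
`H`): `J` is obtained from `H` by subdividing, at least once, every edge of `H` not in
`Pe`, and not subdividing the edges in `Pe`.  This is expressed by a vertex embedding `f`
and, for every edge of `H`, an induced path (`route`) of `J` between the images of its
ends; edges in `Pe` keep length 1, edges outside `Pe` get length at least 2; internal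
vertices of the routes are new and distinct for distinct edges; and the edges and
vertices of `J` are exactly those arising from the routes and from `f`. -/
def IsFilleting {α β : Type*} (H : SimpleGraph α) (Pe : Set (Sym2 α))
    (J : SimpleGraph β) : Prop :=
  ∃ (f : α ↪ β) (route : ∀ ⦃u v : α⦄, H.Adj u v → J.Walk (f u) (f v)),
    (∀ (u v : α) (h : H.Adj u v), (route h).IsPath) ∧
    (∀ (u v : α) (h : H.Adj u v), route h.symm = (route h).reverse) ∧
    (∀ (u v : α) (h : H.Adj u v), s(u, v) ∈ Pe → (route h).length = 1) ∧
    (∀ (u v : α) (h : H.Adj u v), s(u, v) ∉ Pe → 2 ≤ (route h).length) ∧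
    (∀ (u v : α) (h : H.Adj u v), ∀ w ∈ (route h).support,
      w ≠ f u → w ≠ f v → ∀ x : α, f x ≠ w) ∧
    (∀ (u v x y : α) (h : H.Adj u v) (h' : H.Adj x y), s(u, v) ≠ s(x, y) →
      ∀ w ∈ (route h).support, w ≠ f u → w ≠ f v → w ∉ (route h').support) ∧
    (∀ a b : β, J.Adj a b → ∃ (u v : α) (h : H.Adj u v), s(a, b) ∈ (route h).edges) ∧
    (∀ b : β, (∃ x : α, f x = b) ∨ ∃ (u v : α) (h : H.Adj u v), b ∈ (route h).support)

/-- `v` has at least three neighbours in `T` (degree at least three). -/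
def ThreeNbrs {α : Type*} (T : SimpleGraph α) (v : α) : Prop :=
  ∃ a b c : α, a ≠ b ∧ a ≠ c ∧ b ≠ c ∧ T.Adj v a ∧ T.Adj v b ∧ T.Adj v c

theorem stmt_18 {α β : Type*} (T : SimpleGraph α) (hT : T.IsTree)
    (x y : α) (p : T.Walk x y) (hp : p.IsPath)
    (hspine : ∀ v : α, ThreeNbrs T v → v ∈ p.support)
    (J : SimpleGraph β) (hJ : IsFilleting T {e | e ∈ p.edges} J) :
    ∃ g : α ↪ β, ∀ u v : α, T.Adj u v ↔ J.Adj (g u) (g v) := by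
  classical
  obtain ⟨f, route, h1, h2, h3, h4, h5, h6, h7, -⟩ := hJ
  have h3' : ∀ (u v : α) (h : T.Adj u v), s(u, v) ∈ p.edges → (route h).length = 1 :=
    fun u v h he => h3 u v h he
  have h4' : ∀ (u v : α) (h : T.Adj u v), s(u, v) ∉ p.edges → 2 ≤ (route h).length :=
    fun u v h he => h4 u v h he
  have hspine' : ∀ v : α, (∃ a b c : α, a ≠ b ∧ a ≠ c ∧ b ≠ c ∧
      T.Adj v a ∧ T.Adj v b ∧ T.Adj v c) → v ∈ p.support :=
    fun v hv => hspine v hv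
  exact ⟨⟨Stmt18.gmap route hT x,
      Stmt18.gmap_injective route hT hp hspine' h1 h3' h4' h5 h6 h2⟩,
    fun u v => ⟨fun h => Stmt18.adj_gmap route hT h1 h,
      fun h => Stmt18.adj_of_gmap_adj route hT hp hspine' h1 h3' h4' h5 h6 h2 h7 h⟩⟩
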